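/- arXiv:math-ph/0003023 — 2 statements merged into one kernel-verified Lean document; each statement's English description precedes it below -/
import Mathlib

section
/- Let $b, c > 0$ and $R > 0$. Then $\int_{\mathbb{R}^2} e^{-b(R-|x|)^2} e^{-c|x|^2}\,dx \ge C(b,c)\, e^{-\frac{bc}{b+c}R^2}$ for some constant $C(b,c) > 0$ independent of $R$. In particular, with $b = 1/L^2$ and $c = B/2$, the exponent is $-R^2/(L^2 + 2B^{-1})$. -/
open MeasureTheory Real

/-- Gaussian interplay integral: for `b, c > 0` there is `C(b,c) > 0` such that
for all `R > 0`,
`∫_{ℝ²} e^{-b(R-|x|)²} e^{-c|x|²} dx ≥ C e^{-(bc/(b+c)) R²}`. -/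
theorem stmt1 (b c : ℝ) (hb : 0 < b) (hc : 0 < c) :
    ∃ C : ℝ, 0 < C ∧ ∀ R : ℝ, 0 < R →
      C * Real.exp (-(b * c / (b + c)) * R ^ 2) ≤
        ∫ x : EuclideanSpace ℝ (Fin 2),
          Real.exp (-b * (R - ‖x‖) ^ 2) * Real.exp (-c * ‖x‖ ^ 2) := by
  have hbc : 0 < b + c := by linarith
  set B : Set (EuclideanSpace ℝ (Fin 2)) := Metric.ball (0 : EuclideanSpace ℝ (Fin 2)) 1
  have hBpos : 0 < (volume B).toReal := by
    have h1 : 0 < volume B := Metric.measure_ball_pos _ _ one_pos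
    have h2 : volume B < ⊤ := measure_ball_lt_top
    exact ENNReal.toReal_pos h1.ne' h2.ne
  refine ⟨(volume B).toReal * Real.exp (-(b + c)), by positivity, fun R hR => ?_⟩
  set r : ℝ := b * R / (b + c) with hr
  have hr0 : 0 ≤ r := by positivity
  -- the point at radius r
  set e : EuclideanSpace ℝ (Fin 2) := EuclideanSpace.single (0 : Fin 2) (1 : ℝ)
  have he : ‖e‖ = 1 := by simp [e]
  set x0 : EuclideanSpace ℝ (Fin 2) := r • e
  have hx0 : ‖x0‖ = r := by
    rw [norm_smul, he, mul_one, Real.norm_eq_abs, abs_of_nonneg hr0]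
  -- integrability
  have hmeas : AEStronglyMeasurable
      (fun x : EuclideanSpace ℝ (Fin 2) =>
        Real.exp (-b * (R - ‖x‖) ^ 2) * Real.exp (-c * ‖x‖ ^ 2)) volume := by
    apply Continuous.aestronglyMeasurable
    continuity
  have hint : Integrable
      (fun x : EuclideanSpace ℝ (Fin 2) =>
        Real.exp (-b * (R - ‖x‖) ^ 2) * Real.exp (-c * ‖x‖ ^ 2)) := by
    have hg : Integrable (fun v : EuclideanSpace ℝ (Fin 2) =>
        Complex.exp (-(c : ℂ) * ‖v‖ ^ 2 + 0 * ((inner ℝ (0 : EuclideanSpace ℝ (Fin 2)) v : ℝ) : ℂ))) :=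
      GaussianFourier.integrable_cexp_neg_mul_sq_norm_add (by simpa using hc) 0 0
    refine hg.norm.mono hmeas (Filter.Eventually.of_forall fun x => ?_)
    have h1 : ‖Complex.exp (-(c : ℂ) * ‖x‖ ^ 2 + 0 * ((inner ℝ (0 : EuclideanSpace ℝ (Fin 2)) x : ℝ) : ℂ))‖
        = Real.exp (-c * ‖x‖ ^ 2) := by
      rw [Complex.norm_exp]
      norm_num
      left; rw [← Complex.ofReal_pow, Complex.ofReal_re]
    rw [norm_norm, h1, Real.norm_eq_abs, abs_of_nonneg (by positivity)]
    calc Real.exp (-b * (R - ‖x‖) ^ 2) * Real.exp (-c * ‖x‖ ^ 2)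
        ≤ 1 * Real.exp (-c * ‖x‖ ^ 2) := by
          apply mul_le_mul_of_nonneg_right _ (Real.exp_pos _).le
          rw [Real.exp_le_one_iff]; nlinarith [sq_nonneg (R - ‖x‖)]
      _ = Real.exp (-c * ‖x‖ ^ 2) := one_mul _
  -- pointwise lower bound on the ball x0 + B
  have key : ∀ x ∈ Metric.ball x0 1,
      Real.exp (-(b + c)) * Real.exp (-(b * c / (b + c)) * R ^ 2) ≤
        Real.exp (-b * (R - ‖x‖) ^ 2) * Real.exp (-c * ‖x‖ ^ 2) := by
    intro x hx
    rw [← Real.exp_add, ← Real.exp_add, Real.exp_le_exp]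
    have hd : |‖x‖ - r| ≤ 1 := by
      rw [← hx0]
      exact (abs_norm_sub_norm_le x x0).trans (mem_ball_iff_norm.mp hx).le
    have hd2 : (‖x‖ - r) ^ 2 ≤ 1 := by
      rw [← one_pow 2]; exact sq_le_sq' (by linarith [abs_le.mp hd]) (by linarith [abs_le.mp hd])
    have halg : -b * (R - ‖x‖) ^ 2 + -c * ‖x‖ ^ 2
        = -(b + c) * (‖x‖ - r) ^ 2 + -(b * c / (b + c)) * R ^ 2 := by
      rw [hr]
      field_simp
      ring
    rw [halg]
    have : -(b + c) * (‖x‖ - r) ^ 2 ≥ -(b + c) := by nlinarith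
    linarith
  -- put it together
  have hsub : ∫ x in Metric.ball x0 1,
      Real.exp (-b * (R - ‖x‖) ^ 2) * Real.exp (-c * ‖x‖ ^ 2) ≤
      ∫ x : EuclideanSpace ℝ (Fin 2),
        Real.exp (-b * (R - ‖x‖) ^ 2) * Real.exp (-c * ‖x‖ ^ 2) :=
    setIntegral_le_integral hint (Filter.Eventually.of_forall fun x => by positivity)
  have hlow : (Real.exp (-(b + c)) * Real.exp (-(b * c / (b + c)) * R ^ 2)) *
      (volume (Metric.ball x0 1)).toReal ≤
      ∫ x in Metric.ball x0 1,
        Real.exp (-b * (R - ‖x‖) ^ 2) * Real.exp (-c * ‖x‖ ^ 2) := by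
    rw [mul_comm, ← smul_eq_mul, ← Measure.real_def]
    apply setIntegral_ge_of_const_le measurableSet_ball measure_ball_lt_top.ne key
    exact hint.integrableOn
  have hvol : volume (Metric.ball x0 1) = volume B := by
    simpa [B] using Measure.addHaar_ball_center (volume : Measure (EuclideanSpace ℝ (Fin 2))) x0 1
  calc (volume B).toReal * Real.exp (-(b + c)) * Real.exp (-(b * c / (b + c)) * R ^ 2)
      = (Real.exp (-(b + c)) * Real.exp (-(b * c / (b + c)) * R ^ 2)) *
        (volume (Metric.ball x0 1)).toReal := by rw [hvol]; ring
    _ ≤ _ := hlow.trans hsub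
end

section
/- With $\varphi_0(x) = \sqrt{\frac{B}{2\pi}} e^{-B|x|^2/4}$ and $W_\eta(x) = \frac{1}{2}\exp\left(-(1+\eta^{-1}) - \frac{(R-|x|)^2}{L^2}(1+\eta)\right)$ for $|x| \le R$, one has $\int_{|x|\le R} W_\eta(x)|\varphi_0(x)|^2\,dx \ge C(B, L, \eta)\, \exp\left(-(1+\eta^{-1}) - \frac{R^2}{L^2 + 2B^{-1}}(1+\eta)\right)$ for some constant $C(B,L,\eta) > 0$ independent of $R \ge 1$. -/
open MeasureTheory Real

lemma stmt9_aux (a b δ R q : ℝ) (ha : 0 < a) (hb : 0 < b) (hδ0 : 0 < δ) (hR : 1 ≤ R)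
    (hq : (a+b)*q = a*R) :
    (a*(R - q + δ)^2 + b*(q + δ)^2) * (a+b)^2 ≤
      (a+b)*(a*b*R^2) + (a+b)^3*(2*(δ*R) + (δ*R)^2) := by
  have hs : 0 < a + b := by linarith
  have e1 : (a+b)*(R-q) = b*R := by nlinarith [hq]
  have key1 : (a*(R - q + δ)^2 + b*(q + δ)^2) * (a+b)^2
      = a*((a+b)*(R-q)+(a+b)*δ)^2 + b*((a+b)*q+(a+b)*δ)^2 := by ring
  rw [key1, e1, hq]
  have h1 : (0:ℝ) ≤ δ*(a+b)*R*(a^2+b^2) := by positivity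
  have h2 : (0:ℝ) ≤ δ^2*(a+b)^3*(R^2-1) := by
    have : (0:ℝ) ≤ R^2 - 1 := by nlinarith
    positivity
  nlinarith [h1, h2]

lemma stmt9_final (Q V c R t m K s : ℝ) (hQ : 0 ≤ Q) (hV : 0 ≤ V) (hc : 0 ≤ c) (hR : 0 < R)
    (key : (t-m)*R^2 ≤ Real.exp ((t-m)*R^2)) :
    Q*Real.exp (-K)*V*c^2*(t-m) * Real.exp (s - t*R^2)
      ≤ Q*Real.exp (s - (m*R^2+K)) * ((c/R)^2*V) := by
  have hstep : Q*Real.exp (-K)*V*c^2*(t-m) * Real.exp (s - t*R^2)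
      = (Q*Real.exp (-K)*V*(c^2/R^2) * Real.exp (s - t*R^2)) * ((t-m)*R^2) := by
    field_simp
  rw [hstep]
  have hP : 0 ≤ Q*Real.exp (-K)*V*(c^2/R^2) * Real.exp (s - t*R^2) := by positivity
  calc (Q*Real.exp (-K)*V*(c^2/R^2) * Real.exp (s - t*R^2)) * ((t-m)*R^2)
      ≤ (Q*Real.exp (-K)*V*(c^2/R^2) * Real.exp (s - t*R^2)) * Real.exp ((t-m)*R^2) :=
        mul_le_mul_of_nonneg_left key hP
    _ = Q*Real.exp (s - (m*R^2+K)) * ((c/R)^2*V) := by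
        rw [show s - (m*R^2+K) = ((t-m)*R^2) + ((s - t*R^2) + (-K)) by ring,
          Real.exp_add, Real.exp_add, div_pow]
        ring

/-- Lower bound on the interaction of the Gaussian ground state with the
Gaussian boundary potential `W_η`: there is `C(B,L,η) > 0` so that for all
`R ≥ 1`,
`∫_{|x|≤R} W_η |φ₀|² ≥ C exp(-(1+η⁻¹) - R²(1+η)/(L²+2B⁻¹))`. -/
theorem stmt9 (B L η : ℝ) (hB : 0 < B) (hL : 0 < L) (hη : 0 < η) :
    ∃ C : ℝ, 0 < C ∧ ∀ R : ℝ, 1 ≤ R →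
      C * Real.exp (-(1 + η⁻¹) - R ^ 2 / (L ^ 2 + 2 * B⁻¹) * (1 + η)) ≤
        ∫ x in Metric.closedBall (0 : EuclideanSpace ℝ (Fin 2)) R,
          ((1 / 2) * Real.exp (-(1 + η⁻¹) - (R - ‖x‖) ^ 2 / L ^ 2 * (1 + η))) *
            (B / (2 * Real.pi) * Real.exp (-B * ‖x‖ ^ 2 / 2)) := by
  have hπ := Real.pi_pos
  have hL2 : (0:ℝ) < L^2 := by positivity
  obtain ⟨a, ha⟩ : ∃ x : ℝ, x = (1+η)/L^2 := ⟨_, rfl⟩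
  obtain ⟨b, hb⟩ : ∃ x : ℝ, x = B/2 := ⟨_, rfl⟩
  have hapos : 0 < a := by rw [ha]; positivity
  have hbpos : 0 < b := by rw [hb]; positivity
  have hab : 0 < a + b := by positivity
  obtain ⟨c, hc⟩ : ∃ x : ℝ, x = b/(a+b) := ⟨_, rfl⟩
  have hcpos : 0 < c := by rw [hc]; positivity
  obtain ⟨V, hV⟩ : ∃ x : ℝ, x = (volume (Metric.ball (0:EuclideanSpace ℝ (Fin 2)) 1)).toReal :=
    ⟨_, rfl⟩
  have hVpos : 0 < V := by
    rw [hV]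
    exact ENNReal.toReal_pos (Metric.measure_ball_pos volume _ one_pos).ne' measure_ball_lt_top.ne
  obtain ⟨t, ht⟩ : ∃ x : ℝ, x = (1+η)/(L^2+2*B⁻¹) := ⟨_, rfl⟩
  obtain ⟨m, hm⟩ : ∃ x : ℝ, x = a*b/(a+b) := ⟨_, rfl⟩
  have hmt : m < t := by
    have h1 : m = (1+η)*B/(2*(1+η)+B*L^2) := by rw [hm, ha, hb]; field_simp
    have h2 : t = (1+η)*B/(B*L^2+2) := by rw [ht]; field_simp
    rw [h1, h2, div_lt_div_iff₀ (by positivity) (by nlinarith)]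
    nlinarith [mul_pos hB hη, mul_pos (mul_pos hB hη) hB]
  obtain ⟨K, hK⟩ : ∃ x : ℝ, x = (a+b)*(2*c+c^2) := ⟨_, rfl⟩
  refine ⟨B/(4*π)*Real.exp (-K)*V*c^2*(t-m),
    mul_pos (by positivity) (sub_pos.mpr hmt), ?_⟩
  intro R hR
  have hR0 : 0 < R := lt_of_lt_of_le one_pos hR
  obtain ⟨r₀, hr₀⟩ : ∃ x : ℝ, x = a*R/(a+b) := ⟨_, rfl⟩
  obtain ⟨δ, hδ⟩ : ∃ x : ℝ, x = c/R := ⟨_, rfl⟩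
  have hδpos : 0 < δ := by rw [hδ]; positivity
  have hδc : δ ≤ c := by rw [hδ]; exact div_le_self hcpos.le hR
  have hδR : δ * R = c := by rw [hδ]; field_simp
  have hr₀nn : 0 ≤ r₀ := by rw [hr₀]; positivity
  have hr₀δ : r₀ + δ ≤ R := by
    have h1 : δ ≤ b*R/(a+b) := by
      refine hδc.trans ?_
      rw [hc]
      gcongr
      nlinarith
    have h2 : r₀ + b*R/(a+b) = R := by rw [hr₀]; field_simp
    linarith
  set x₀ : EuclideanSpace ℝ (Fin 2) := EuclideanSpace.single 0 r₀ with hx₀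
  have hnx₀ : ‖x₀‖ = r₀ := by
    rw [hx₀, EuclideanSpace.norm_single, Real.norm_eq_abs, abs_of_nonneg hr₀nn]
  clear_value x₀
  set f : EuclideanSpace ℝ (Fin 2) → ℝ := fun x =>
    ((1 / 2) * Real.exp (-(1 + η⁻¹) - (R - ‖x‖) ^ 2 / L ^ 2 * (1 + η))) *
      (B / (2 * Real.pi) * Real.exp (-B * ‖x‖ ^ 2 / 2)) with hf
  have hcont : Continuous f := by fun_prop
  have hfnn : ∀ x, 0 ≤ f x := fun x => by rw [hf]; positivity
  have hint : IntegrableOn f (Metric.closedBall 0 R) :=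
    ContinuousOn.integrableOn_compact (isCompact_closedBall _ _) hcont.continuousOn
  have hsub : Metric.closedBall x₀ δ ⊆ Metric.closedBall (0:EuclideanSpace ℝ (Fin 2)) R := by
    intro y hy
    rw [Metric.mem_closedBall, dist_eq_norm] at hy
    rw [Metric.mem_closedBall, dist_zero_right]
    calc ‖y‖ = ‖(y - x₀) + x₀‖ := by congr 1; abel
    _ ≤ ‖y - x₀‖ + ‖x₀‖ := norm_add_le _ _
    _ ≤ δ + r₀ := by rw [hnx₀]; linarith
    _ ≤ R := by linarith
  have hfeq : ∀ x : EuclideanSpace ℝ (Fin 2),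
      f x = B/(4*π) * Real.exp (-(1+η⁻¹) - (a*(R-‖x‖)^2 + b*‖x‖^2)) := by
    intro x
    have harg : (-(1+η⁻¹) - (R-‖x‖)^2/L^2*(1+η)) + (-B*‖x‖^2/2)
        = -(1+η⁻¹) - (a*(R-‖x‖)^2 + b*‖x‖^2) := by
      rw [ha, hb]; field_simp; ring
    rw [hf]
    simp only
    rw [← harg, Real.exp_add]
    ring
  clear_value f
  obtain ⟨M, hM⟩ : ∃ x : ℝ, x = B/(4*π)*Real.exp (-(1+η⁻¹) - (m*R^2+K)) := ⟨_, rfl⟩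
  have hfM : ∀ x ∈ Metric.closedBall x₀ δ, M ≤ f x := by
    intro x hx
    rw [Metric.mem_closedBall, dist_eq_norm] at hx
    obtain ⟨w, hw⟩ : ∃ w : ℝ, w = ‖x‖ := ⟨_, rfl⟩
    have hwnn : 0 ≤ w := hw ▸ norm_nonneg x
    have h1 : ‖x‖ ≤ r₀ + δ := by
      calc ‖x‖ = ‖(x - x₀) + x₀‖ := by congr 1; abel
      _ ≤ ‖x - x₀‖ + ‖x₀‖ := norm_add_le _ _
      _ ≤ δ + r₀ := by rw [hnx₀]; linarith
      _ = r₀ + δ := by ring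
    have h2 : r₀ - δ ≤ ‖x‖ := by
      have h := norm_sub_norm_le x₀ x
      rw [hnx₀, show x₀ - x = -(x - x₀) by abel, norm_neg] at h
      linarith
    rw [← hw] at h1 h2
    have hRx : (R - w)^2 ≤ (R - r₀ + δ)^2 := by
      apply sq_le_sq'
      · linarith
      · linarith
    have hx2 : w^2 ≤ (r₀+δ)^2 := by
      rw [pow_two, pow_two]
      exact mul_self_le_mul_self hwnn h1
    have he2 : a*(R - r₀ + δ)^2 + b*(r₀+δ)^2 ≤ m*R^2 + K := by
      have hq : (a+b)*r₀ = a*R := by rw [hr₀]; field_simp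
      have h := stmt9_aux a b δ R r₀ hapos hbpos hδpos hR hq
      rw [hδR] at h
      have hABC : m*R^2 + K = ((a+b)*(a*b*R^2) + (a+b)^3*(2*c+c^2))/(a+b)^2 := by
        rw [hm, hK]; field_simp
      rw [hABC, le_div_iff₀ (by positivity)]
      exact h
    have hexp : a*(R-w)^2 + b*w^2 ≤ m*R^2 + K := by
      have t1 := mul_le_mul_of_nonneg_left hRx hapos.le
      have t2 := mul_le_mul_of_nonneg_left hx2 hbpos.le
      linarith
    rw [hfeq x, ← hw, hM]
    have hee := Real.exp_le_exp.mpr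
      (show -(1+η⁻¹) - (m*R^2+K) ≤ -(1+η⁻¹) - (a*(R-w)^2 + b*w^2) by linarith)
    exact mul_le_mul_of_nonneg_left hee (by positivity)
  have hvol : (volume (Metric.closedBall x₀ δ)).toReal = δ^2 * V := by
    rw [Measure.addHaar_closedBall volume x₀ hδpos.le, finrank_euclideanSpace_fin,
      ENNReal.toReal_mul, ENNReal.toReal_ofReal (by positivity), hV]
  have hstep1 : M * (δ^2 * V) ≤ ∫ x in Metric.closedBall x₀ δ, f x := by
    rw [← hvol]
    exact setIntegral_ge_of_const_le_real measurableSet_closedBall measure_closedBall_lt_top.ne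
      hfM (hint.mono_set hsub)
  have hstep2 : (∫ x in Metric.closedBall x₀ δ, f x)
      ≤ ∫ x in Metric.closedBall (0:EuclideanSpace ℝ (Fin 2)) R, f x :=
    setIntegral_mono_set hint (Filter.Eventually.of_forall hfnn)
      (HasSubset.Subset.eventuallyLE hsub)
  have key : (t-m)*R^2 ≤ Real.exp ((t-m)*R^2) := by
    linarith [Real.add_one_le_exp ((t-m)*R^2)]
  have hfinal : B/(4*π)*Real.exp (-K)*V*c^2*(t-m) *
      Real.exp (-(1 + η⁻¹) - R ^ 2 / (L ^ 2 + 2 * B⁻¹) * (1 + η)) ≤ M * (δ^2 * V) := by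
    have h2' : -(1 + η⁻¹) - R ^ 2 / (L ^ 2 + 2 * B⁻¹) * (1 + η) = -(1+η⁻¹) - t*R^2 := by
      rw [ht]; ring
    rw [hM, hδ, h2']
    exact stmt9_final (B/(4*π)) V c R t m K (-(1+η⁻¹)) (by positivity) hVpos.le hcpos.le hR0 key
  calc B/(4*π)*Real.exp (-K)*V*c^2*(t-m) *
      Real.exp (-(1 + η⁻¹) - R ^ 2 / (L ^ 2 + 2 * B⁻¹) * (1 + η))
      ≤ M * (δ^2 * V) := hfinal
    _ ≤ ∫ x in Metric.closedBall x₀ δ, f x := hstep1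
    _ ≤ ∫ x in Metric.closedBall (0:EuclideanSpace ℝ (Fin 2)) R, f x := hstep2
end
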